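/- arXiv:2011.09678 — 5 statements merged into one kernel-verified Lean document; each statement's English description precedes it below -/
import Mathlib

section
/- Let H be a real Hilbert space, x₁, …, x_M points of a set X, φ : X → H a feature map, y ∈ ℝ^M, and λ > 0. Define the regularized empirical risk J(f) = (1/M)·∑_{i=1}^M (y_i − ⟪f, φ(x_i)⟫)² + λ·‖f‖² for f ∈ H, and let G be the Gram matrix G_{ij} = ⟪φ(x_i), φ(x_j)⟫. Then J has a unique minimizer over H, given by f* = ∑_{i=1}^M α_i φ(x_i) where α = (G + Mλ·I)⁻¹ y; that is, J(f*) ≤ J(f) for all f ∈ H, with equality only when f = f*. -/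
open scoped Matrix

/-- The regularized empirical risk `J(f) = (1/M) ∑ᵢ (yᵢ - ⟪f, φ(xᵢ)⟫)² + λ‖f‖²` has a
unique minimizer over `H`, namely `f* = ∑ᵢ αᵢ φ(xᵢ)` with `α = (G + Mλ·I)⁻¹ y`. -/
theorem regularized_least_squares_unique_minimizer
    {H X : Type*} [NormedAddCommGroup H] [InnerProductSpace ℝ H] [CompleteSpace H]
    {M : ℕ} (hM : 0 < M) (x : Fin M → X) (φ : X → H) (y : Fin M → ℝ)
    (lam : ℝ) (hlam : 0 < lam)
    (J : H → ℝ)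
    (hJ : ∀ f : H, J f =
      (1 / (M : ℝ)) * ∑ i, (y i - inner ℝ f (φ (x i))) ^ 2 + lam * ‖f‖ ^ 2)
    (G : Matrix (Fin M) (Fin M) ℝ) (hG : ∀ i j, G i j = inner ℝ (φ (x i)) (φ (x j)))
    (α : Fin M → ℝ)
    (hα : α = (G + ((M : ℝ) * lam) • (1 : Matrix (Fin M) (Fin M) ℝ))⁻¹.mulVec y)
    (fstar : H) (hf : fstar = ∑ i, α i • φ (x i)) :
    (∀ f : H, J fstar ≤ J f) ∧ (∀ f : H, J f = J fstar → f = fstar) := by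
  have hMR : (0 : ℝ) < (M : ℝ) := by exact_mod_cast hM
  set A : Matrix (Fin M) (Fin M) ℝ := G + ((M : ℝ) * lam) • 1 with hAdef
  -- quadratic form of G is a squared norm
  have hquad : ∀ v : Fin M → ℝ, v ⬝ᵥ G.mulVec v = ‖∑ i, v i • φ (x i)‖ ^ 2 := by
    intro v
    have : (inner ℝ (∑ i, v i • φ (x i)) (∑ j, v j • φ (x j)) : ℝ)
        = v ⬝ᵥ G.mulVec v := by
      rw [sum_inner (𝕜 := ℝ)]
      simp only [dotProduct, Matrix.mulVec, dotProduct]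
      refine Finset.sum_congr rfl fun i _ => ?_
      rw [real_inner_smul_left, inner_sum (𝕜 := ℝ)]
      congr 1
      refine Finset.sum_congr rfl fun j _ => ?_
      rw [real_inner_smul_right, hG]
      ring
    rw [← this, real_inner_self_eq_norm_sq]
  have hPD : A.PosDef := by
    rw [Matrix.posDef_iff_dotProduct_mulVec]
    constructor
    · ext i j
      simp [hAdef, Matrix.conjTranspose_apply, Matrix.one_apply, hG, real_inner_comm]
      rcases eq_or_ne i j with h | h
      · simp [h]
      · simp [h, Ne.symm h]
    · intro v hv
      have hv2 : 0 < v ⬝ᵥ v := by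
        rcases Function.ne_iff.mp hv with ⟨i, hi⟩
        have : 0 < v i ^ 2 := by exact pow_two_pos_of_ne_zero hi
        calc 0 < v i ^ 2 := this
          _ ≤ ∑ j, v j * v j := by
              rw [sq]
              exact Finset.single_le_sum (f := fun j => v j * v j)
                (fun j _ => mul_self_nonneg _) (Finset.mem_univ i)
          _ = v ⬝ᵥ v := rfl
      have : (star v) ⬝ᵥ A.mulVec v
          = v ⬝ᵥ G.mulVec v + ((M : ℝ) * lam) * (v ⬝ᵥ v) := by
        simp [hAdef, Matrix.add_mulVec, Matrix.smul_mulVec, Matrix.one_mulVec,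
          dotProduct_add, dotProduct_smul, smul_eq_mul]
      rw [this, hquad]
      have h1 : 0 ≤ ‖∑ i, v i • φ (x i)‖ ^ 2 := by positivity
      have h2 : 0 < (M : ℝ) * lam * (v ⬝ᵥ v) := by positivity
      linarith
  have hAy : A.mulVec α = y := by
    rw [hα, Matrix.mulVec_mulVec, Matrix.mul_nonsing_inv _ hPD.det_pos.ne'.isUnit,
      Matrix.one_mulVec]
  -- the key residual identity
  have hkey : ∀ i, y i - (inner ℝ fstar (φ (x i)) : ℝ) = (M : ℝ) * lam * α i := by
    intro i
    have h1 : (inner ℝ fstar (φ (x i)) : ℝ) = G.mulVec α i := by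
      rw [hf, sum_inner]
      simp only [Matrix.mulVec, dotProduct]
      refine Finset.sum_congr rfl fun j _ => ?_
      rw [real_inner_smul_left, hG, real_inner_comm]
      ring
    have h2 : G.mulVec α i + (M : ℝ) * lam * α i = y i := by
      have := congrFun hAy i
      simpa [hAdef, Matrix.add_mulVec, Matrix.smul_mulVec, Matrix.one_mulVec,
        smul_eq_mul] using this
    rw [h1]; linarith
  -- decomposition of J
  have hdecomp : ∀ f : H, J f = J fstar
      + (1 / (M : ℝ)) * ∑ i, (inner ℝ (f - fstar) (φ (x i)) : ℝ) ^ 2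
      + lam * ‖f - fstar‖ ^ 2 := by
    intro f
    set g := f - fstar with hg
    have hb : ∀ i, (inner ℝ f (φ (x i)) : ℝ)
        = inner ℝ fstar (φ (x i)) + inner ℝ g (φ (x i)) := by
      intro i
      rw [hg, inner_sub_left]; ring
    have hnorm : ‖f‖ ^ 2 = ‖fstar‖ ^ 2 + 2 * (inner ℝ fstar g : ℝ) + ‖g‖ ^ 2 := by
      have : f = fstar + g := by rw [hg]; abel
      rw [this, norm_add_sq_real]
    have hfsg : (inner ℝ fstar g : ℝ) = ∑ i, α i * inner ℝ g (φ (x i)) := by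
      rw [hf, sum_inner]
      refine Finset.sum_congr rfl fun i _ => ?_
      rw [real_inner_smul_left, real_inner_comm]
    have hsum1 : ∑ i, (y i - (inner ℝ f (φ (x i)) : ℝ)) ^ 2
        = ∑ i, (((M : ℝ) * lam * α i) ^ 2
          - 2 * ((M : ℝ) * lam) * (α i * inner ℝ g (φ (x i)))
          + (inner ℝ g (φ (x i)) : ℝ) ^ 2) := by
      refine Finset.sum_congr rfl fun i _ => ?_
      have h1 := hkey i
      have h2 := hb i
      have : y i - (inner ℝ f (φ (x i)) : ℝ)
          = (M : ℝ) * lam * α i - inner ℝ g (φ (x i)) := by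
        rw [h2]; linarith
      rw [this]; ring
    have hsum2 : ∑ i, (y i - (inner ℝ fstar (φ (x i)) : ℝ)) ^ 2
        = ∑ i, ((M : ℝ) * lam * α i) ^ 2 := by
      refine Finset.sum_congr rfl fun i _ => ?_
      rw [hkey i]
    rw [hJ f, hJ fstar, hsum1, hsum2, hnorm, hfsg]
    rw [Finset.sum_add_distrib, Finset.sum_sub_distrib, ← Finset.mul_sum]
    field_simp
    ring
  refine ⟨fun f => ?_, fun f hfe => ?_⟩
  · rw [hdecomp f]
    have h1 : 0 ≤ (1 / (M : ℝ)) * ∑ i, (inner ℝ (f - fstar) (φ (x i)) : ℝ) ^ 2 := by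
      apply mul_nonneg (by positivity)
      exact Finset.sum_nonneg fun i _ => sq_nonneg _
    have h2 : 0 ≤ lam * ‖f - fstar‖ ^ 2 := by positivity
    linarith
  · have := hdecomp f
    rw [hfe] at this
    have h1 : 0 ≤ (1 / (M : ℝ)) * ∑ i, (inner ℝ (f - fstar) (φ (x i)) : ℝ) ^ 2 := by
      apply mul_nonneg (by positivity)
      exact Finset.sum_nonneg fun i _ => sq_nonneg _
    have h2 : lam * ‖f - fstar‖ ^ 2 = 0 := by linarith [mul_nonneg hlam.le (sq_nonneg ‖f - fstar‖)]
    have h3 : ‖f - fstar‖ = 0 := by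
      have := mul_eq_zero.mp h2
      rcases this with h | h
      · exact absurd h (ne_of_gt hlam)
      · exact pow_eq_zero_iff (by norm_num) |>.mp h
    exact sub_eq_zero.mp (norm_eq_zero.mp h3)
end

section
/- Let H be a real Hilbert space, x₁, …, x_M points of a set X, φ : X → H a feature map with Gram matrix G_{ij} = ⟪φ(x_i), φ(x_j)⟫, and λ > 0. Fix x ∈ X, let Φ ∈ ℝ^M have entries Φ_i = ⟪φ(x_i), φ x⟫, and let f* ∈ H be the unique minimizer over H of J(f) = (1/M)·∑_{i=1}^M (⟪φ(x_i), φ x⟫ − ⟪f, φ(x_i)⟫)² + λ·‖f‖². Then the empirical classifier value satisfies ⟪f*, φ x⟫ = Φᵀ (G + Mλ·I)⁻¹ Φ. -/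
open scoped Matrix

/-- The empirical classifier value of the unique minimizer `f*` of the regularized
least-squares problem satisfies `⟪f*, φ x⟫ = Φᵀ (G + Mλ·I)⁻¹ Φ`, where
`Φᵢ = ⟪φ(xᵢ), φ x⟫`. -/
theorem empirical_classifier_value
    {H X : Type*} [NormedAddCommGroup H] [InnerProductSpace ℝ H] [CompleteSpace H]
    {M : ℕ} (hM : 0 < M) (x : Fin M → X) (φ : X → H)
    (lam : ℝ) (hlam : 0 < lam)
    (G : Matrix (Fin M) (Fin M) ℝ) (hG : ∀ i j, G i j = inner ℝ (φ (x i)) (φ (x j)))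
    (xq : X)
    (Φ : Fin M → ℝ) (hΦ : ∀ i, Φ i = inner ℝ (φ (x i)) (φ xq))
    (J : H → ℝ)
    (hJ : ∀ f : H, J f =
      (1 / (M : ℝ)) * ∑ i, ((inner ℝ (φ (x i)) (φ xq) : ℝ) - inner ℝ f (φ (x i))) ^ 2
        + lam * ‖f‖ ^ 2)
    (fstar : H)
    (hmin : ∀ f : H, J fstar ≤ J f)
    (huniq : ∀ f : H, (∀ g : H, J f ≤ J g) → f = fstar) :
    (inner ℝ fstar (φ xq) : ℝ) =
      Φ ⬝ᵥ (G + ((M : ℝ) * lam) • (1 : Matrix (Fin M) (Fin M) ℝ))⁻¹.mulVec Φ := by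
  have hMlam : (0:ℝ) < (M:ℝ) * lam := by positivity
  set A : Matrix (Fin M) (Fin M) ℝ :=
    G + ((M : ℝ) * lam) • (1 : Matrix (Fin M) (Fin M) ℝ) with hA
  -- G is positive semidefinite
  have hGsd : G.PosSemidef := by
    rw [Matrix.posSemidef_iff_dotProduct_mulVec]
    constructor
    · ext i j
      simp only [Matrix.conjTranspose_apply, star_trivial, hG]
      exact real_inner_comm _ _
    · intro v
      have key : (star v) ⬝ᵥ G.mulVec v = ‖∑ i, v i • φ (x i)‖ ^ 2 := by
        rw [← real_inner_self_eq_norm_sq, sum_inner]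
        simp only [star_trivial, dotProduct, Matrix.mulVec]
        refine Finset.sum_congr rfl fun i _ => ?_
        rw [real_inner_smul_left, inner_sum, Finset.mul_sum]
        simp only [real_inner_smul_right, hG]
        rw [Finset.mul_sum]
        exact Finset.sum_congr rfl fun j _ => by ring
      rw [key]; positivity
  have hsmul : (((M : ℝ) * lam) • (1 : Matrix (Fin M) (Fin M) ℝ)).PosDef := by
    rw [Matrix.posDef_iff_dotProduct_mulVec]
    constructor
    · show _ᴴ = _
      rw [Matrix.conjTranspose_smul]
      simp
    · intro v hv
      rw [Matrix.smul_mulVec, Matrix.one_mulVec, dotProduct_smul]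
      have : (0:ℝ) < star v ⬝ᵥ v := Matrix.dotProduct_star_self_pos_iff.mpr hv
      simpa using mul_pos hMlam this
  have hApd : A.PosDef := Matrix.PosDef.posSemidef_add hGsd hsmul
  have hAunit : IsUnit A.det := hApd.det_pos.ne'.isUnit
  set α : Fin M → ℝ := A⁻¹.mulVec Φ with hα
  have hAα : A.mulVec α = Φ := by
    rw [hα, Matrix.mulVec_mulVec, Matrix.mul_nonsing_inv _ hAunit, Matrix.one_mulVec]
  set f0 : H := ∑ i, α i • φ (x i) with hf0
  have hf0inner : ∀ w : H, (inner ℝ f0 w : ℝ) = ∑ i, α i * inner ℝ (φ (x i)) w := by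
    intro w
    rw [hf0, sum_inner]
    exact Finset.sum_congr rfl fun i _ => by rw [real_inner_smul_left]
  -- gradient condition: for each i, Φ i - ⟪f0, φ xᵢ⟫ = Mλ αᵢ
  have hres : ∀ i, Φ i - (inner ℝ f0 (φ (x i)) : ℝ) = (M : ℝ) * lam * α i := by
    intro i
    have h1 : (inner ℝ f0 (φ (x i)) : ℝ) = (G.mulVec α) i := by
      rw [hf0inner]
      simp only [Matrix.mulVec, dotProduct]
      refine Finset.sum_congr rfl fun j _ => ?_
      rw [hG, real_inner_comm]; ring
    have h2 : (G.mulVec α) i + (M : ℝ) * lam * α i = Φ i := by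
      have := congrFun hAα i
      rw [hA, Matrix.add_mulVec, Matrix.smul_mulVec, Matrix.one_mulVec] at this
      simpa [smul_eq_mul] using this
    rw [h1]; linarith
  have hgrad : ∑ i, (Φ i - (inner ℝ f0 (φ (x i)) : ℝ)) • φ (x i) = ((M : ℝ) * lam) • f0 := by
    rw [hf0, Finset.smul_sum]
    refine Finset.sum_congr rfl fun i _ => ?_
    rw [hres, smul_smul]
  -- f0 is a minimizer
  have hminf0 : ∀ g : H, J f0 ≤ J g := by
    intro g
    rw [hJ, hJ]
    set h : H := g - f0 with hh
    have hg : g = f0 + h := by rw [hh]; abel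
    have hnorm : ‖g‖ ^ 2 = ‖f0‖ ^ 2 + 2 * inner ℝ f0 h + ‖h‖ ^ 2 := by
      rw [hg]; exact norm_add_sq_real f0 h
    have hcross : ∑ i, (Φ i - (inner ℝ f0 (φ (x i)) : ℝ)) * inner ℝ h (φ (x i))
        = (M : ℝ) * lam * inner ℝ f0 h := by
      have : ∑ i, (Φ i - (inner ℝ f0 (φ (x i)) : ℝ)) * inner ℝ h (φ (x i))
          = inner ℝ h (((M : ℝ) * lam) • f0) := by
        rw [← hgrad, inner_sum]
        exact Finset.sum_congr rfl fun i _ => by rw [real_inner_smul_right]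
      rw [this, real_inner_smul_right, real_inner_comm]
    have hterm : ∀ i, ((inner ℝ (φ (x i)) (φ xq) : ℝ) - inner ℝ g (φ (x i))) ^ 2
        = ((inner ℝ (φ (x i)) (φ xq) : ℝ) - inner ℝ f0 (φ (x i))) ^ 2
          - 2 * (Φ i - (inner ℝ f0 (φ (x i)) : ℝ)) * inner ℝ h (φ (x i))
          + ((inner ℝ h (φ (x i)) : ℝ)) ^ 2 := by
      intro i
      have : (inner ℝ g (φ (x i)) : ℝ) = inner ℝ f0 (φ (x i)) + inner ℝ h (φ (x i)) := by
        rw [hg, inner_add_left]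
      rw [this, hΦ]
      ring
    have h2 : ∑ i, 2 * (Φ i - (inner ℝ f0 (φ (x i)) : ℝ)) * inner ℝ h (φ (x i))
        = 2 * ((M : ℝ) * lam * inner ℝ f0 h) := by
      rw [← hcross, Finset.mul_sum]
      refine Finset.sum_congr rfl fun i _ => by ring
    have hsum : ∑ i, ((inner ℝ (φ (x i)) (φ xq) : ℝ) - inner ℝ g (φ (x i))) ^ 2
        = ∑ i, ((inner ℝ (φ (x i)) (φ xq) : ℝ) - inner ℝ f0 (φ (x i))) ^ 2
          - 2 * ((M : ℝ) * lam * inner ℝ f0 h)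
          + ∑ i, ((inner ℝ h (φ (x i)) : ℝ)) ^ 2 := by
      calc ∑ i, ((inner ℝ (φ (x i)) (φ xq) : ℝ) - inner ℝ g (φ (x i))) ^ 2
          = ∑ i, (((inner ℝ (φ (x i)) (φ xq) : ℝ) - inner ℝ f0 (φ (x i))) ^ 2
            - 2 * (Φ i - (inner ℝ f0 (φ (x i)) : ℝ)) * inner ℝ h (φ (x i))
            + ((inner ℝ h (φ (x i)) : ℝ)) ^ 2) := Finset.sum_congr rfl fun i _ => hterm i
        _ = _ := by
            rw [Finset.sum_add_distrib, Finset.sum_sub_distrib, h2]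
    rw [hsum, hnorm]
    have hMne : ((M : ℝ)) ≠ 0 := by positivity
    have hcancel : (1 / (M : ℝ)) * (2 * ((M : ℝ) * lam * inner ℝ f0 h))
        = 2 * lam * inner ℝ f0 h := by field_simp
    have hpos1 : 0 ≤ (1 / (M : ℝ)) * ∑ i, ((inner ℝ h (φ (x i)) : ℝ)) ^ 2 := by
      have : 0 ≤ ∑ i, ((inner ℝ h (φ (x i)) : ℝ)) ^ 2 :=
        Finset.sum_nonneg fun i _ => sq_nonneg _
      positivity
    have hpos2 : 0 ≤ lam * ‖h‖ ^ 2 := by positivity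
    nlinarith [hpos1, hpos2, hcancel]
  -- conclude
  have hfeq : f0 = fstar := huniq f0 hminf0
  rw [← hfeq, hf0inner]
  simp only [dotProduct]
  refine Finset.sum_congr rfl fun i _ => ?_
  rw [← hΦ]; ring
end

section
/- Let H be a real Hilbert space, x₁, …, x_M points of a set X, φ : X → H a feature map, y ∈ ℝ^M, and λ > 0. Define J(f) = (1/M)·∑_{i=1}^M (y_i − ⟪f, φ(x_i)⟫)² + λ·‖f‖² for f ∈ H. Then f ∈ H is a minimizer of J over H if and only if it satisfies the normal equation Mλ·f = ∑_{i=1}^M (y_i − ⟪f, φ(x_i)⟫)·φ(x_i). -/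
/-- `f` minimizes the regularized empirical risk
`J(f) = (1/M) ∑ᵢ (yᵢ - ⟪f, φ(xᵢ)⟫)² + λ‖f‖²` over `H` if and only if it satisfies the
normal equation `Mλ·f = ∑ᵢ (yᵢ - ⟪f, φ(xᵢ)⟫)·φ(xᵢ)`. -/
theorem minimizer_iff_normal_equation
    {H X : Type*} [NormedAddCommGroup H] [InnerProductSpace ℝ H] [CompleteSpace H]
    {M : ℕ} (hM : 0 < M) (x : Fin M → X) (φ : X → H) (y : Fin M → ℝ)
    (lam : ℝ) (hlam : 0 < lam)
    (J : H → ℝ)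
    (hJ : ∀ f : H, J f =
      (1 / (M : ℝ)) * ∑ i, (y i - inner ℝ f (φ (x i))) ^ 2 + lam * ‖f‖ ^ 2)
    (f : H) :
    (∀ g : H, J f ≤ J g) ↔
      ((M : ℝ) * lam) • f = ∑ i, (y i - (inner ℝ f (φ (x i)) : ℝ)) • φ (x i) := by
  set a : Fin M → H := fun i => φ (x i) with ha
  set S : H := ∑ i, (y i - (inner ℝ f (a i) : ℝ)) • a i with hS
  have hM' : (0:ℝ) < M := Nat.cast_pos.mpr hM
  set v : H := ((M : ℝ) * lam) • f - S with hv
  have key : ∀ h : H, J (f + h) = J f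
      + (2 / (M:ℝ)) * (inner ℝ v h : ℝ)
      + ((1/(M:ℝ)) * ∑ i, (inner ℝ h (a i) : ℝ)^2 + lam * ‖h‖^2) := by
    intro h
    rw [hJ, hJ]
    have hnorm : ‖f + h‖^2 = ‖f‖^2 + 2 * (inner ℝ f h : ℝ) + ‖h‖^2 := norm_add_sq_real f h
    have hin : (inner ℝ v h : ℝ)
        = (M:ℝ)*lam * (inner ℝ f h : ℝ) - ∑ i, (y i - (inner ℝ f (a i):ℝ)) * (inner ℝ h (a i) : ℝ) := by
      rw [hv, inner_sub_left, real_inner_smul_left, hS, sum_inner]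
      simp only [real_inner_smul_left]
      congr 1
      exact Finset.sum_congr rfl fun i _ => by rw [real_inner_comm (a i) h]
    have expand : ∀ i : Fin M, (y i - (inner ℝ (f+h) (a i) : ℝ))^2
        = (y i - (inner ℝ f (a i):ℝ))^2 - 2*((y i - (inner ℝ f (a i):ℝ)) * (inner ℝ h (a i):ℝ))
          + ((inner ℝ h (a i):ℝ))^2 := by
      intro i; rw [inner_add_left]; ring
    calc (1 / (M : ℝ)) * ∑ i, (y i - (inner ℝ (f+h) (a i):ℝ)) ^ 2 + lam * ‖f + h‖ ^ 2
        = (1 / (M : ℝ)) * (∑ i, (y i - (inner ℝ f (a i):ℝ))^2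
            - 2 * ∑ i, (y i - (inner ℝ f (a i):ℝ)) * (inner ℝ h (a i):ℝ)
            + ∑ i, ((inner ℝ h (a i):ℝ))^2)
          + lam * (‖f‖^2 + 2 * (inner ℝ f h : ℝ) + ‖h‖^2) := by
          rw [hnorm]
          congr 2
          simp only [expand]
          rw [Finset.sum_add_distrib, Finset.sum_sub_distrib, ← Finset.mul_sum]
      _ = (1 / (M : ℝ)) * ∑ i, (y i - (inner ℝ f (a i):ℝ)) ^ 2 + lam * ‖f‖ ^ 2
          + (2 / (M:ℝ)) * (inner ℝ v h : ℝ)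
          + ((1/(M:ℝ)) * ∑ i, (inner ℝ h (a i) : ℝ)^2 + lam * ‖h‖^2) := by
          rw [hin]; field_simp; ring
  constructor
  · intro hmin
    by_contra hne
    have hv0 : v ≠ 0 := by
      intro h0
      exact hne (sub_eq_zero.mp h0)
    set Q : ℝ := (1/(M:ℝ)) * ∑ i, (inner ℝ v (a i) : ℝ)^2 + lam * ‖v‖^2 with hQ
    have hQpos : 0 < Q := by
      have h1 : (0:ℝ) ≤ (1/(M:ℝ)) * ∑ i, (inner ℝ v (a i) : ℝ)^2 :=
        mul_nonneg (by positivity) (Finset.sum_nonneg fun i _ => sq_nonneg _)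
      have h2 : 0 < lam * ‖v‖^2 := by
        have := norm_pos_iff.mpr hv0
        positivity
      rw [hQ]; linarith
    set t : ℝ := -‖v‖^2 / ((M:ℝ) * Q) with ht
    have hkey := key (t • v)
    have e1 : (inner ℝ v (t • v) : ℝ) = t * ‖v‖^2 := by
      rw [real_inner_smul_right, real_inner_self_eq_norm_sq]
    have e2 : ∑ i, (inner ℝ (t • v) (a i) : ℝ)^2 = t^2 * ∑ i, (inner ℝ v (a i) : ℝ)^2 := by
      rw [Finset.mul_sum]
      exact Finset.sum_congr rfl fun i _ => by rw [real_inner_smul_left, mul_pow]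
    have e3 : ‖t • v‖^2 = t^2 * ‖v‖^2 := by
      rw [norm_smul, mul_pow, Real.norm_eq_abs, sq_abs]
    rw [e1, e2, e3] at hkey
    have hle := hmin (f + t • v)
    rw [hkey] at hle
    have hle' : 0 ≤ (2 / (M:ℝ)) * (t * ‖v‖^2) + t^2 * Q := by
      have : (1/(M:ℝ)) * (t^2 * ∑ i, (inner ℝ v (a i) : ℝ)^2) + lam * (t^2 * ‖v‖^2)
          = t^2 * Q := by rw [hQ]; ring
      nlinarith [hle]
    have hneg : (2 / (M:ℝ)) * (t * ‖v‖^2) + t^2 * Q < 0 := by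
      have hvn : 0 < ‖v‖^2 := by
        have := norm_pos_iff.mpr hv0; positivity
      have hMQ : 0 < (M:ℝ) * Q := mul_pos hM' hQpos
      rw [ht]
      have h1 : (2 / (M:ℝ)) * (-‖v‖^2 / ((M:ℝ) * Q) * ‖v‖^2)
          = -2 * ‖v‖^4 / ((M:ℝ)^2 * Q) := by field_simp
      have h2 : (-‖v‖^2 / ((M:ℝ) * Q))^2 * Q = ‖v‖^4 / ((M:ℝ)^2 * Q) := by
        field_simp
      rw [h1, h2]
      have : -2 * ‖v‖^4 / ((M:ℝ)^2 * Q) + ‖v‖^4 / ((M:ℝ)^2 * Q)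
          = -(‖v‖^4 / ((M:ℝ)^2 * Q)) := by ring
      rw [this]
      have h4 : 0 < ‖v‖^4 := by nlinarith [hvn]
      have : 0 < ‖v‖^4 / ((M:ℝ)^2 * Q) :=
        div_pos h4 (mul_pos (by positivity : (0:ℝ) < (M:ℝ)^2) hQpos)
      linarith
    linarith
  · intro heq g
    have hv0 : v = 0 := sub_eq_zero.mpr heq
    have := key (g - f)
    rw [add_sub_cancel] at this
    rw [this, hv0, inner_zero_left]
    have h1 : (0:ℝ) ≤ (1/(M:ℝ)) * ∑ i, (inner ℝ (g - f) (a i) : ℝ)^2 :=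
      mul_nonneg (by positivity) (Finset.sum_nonneg fun i _ => sq_nonneg _)
    have h2 : (0:ℝ) ≤ lam * ‖g - f‖^2 := by positivity
    simp only [mul_zero]
    linarith
end

section
/- Let X be a nonempty set and K : X × X → ℝ a symmetric positive semidefinite kernel, i.e., K(x,x') = K(x',x) for all x, x' ∈ X and for every finite family x₁, …, x_m ∈ X and every c ∈ ℝ^m one has ∑_{i,j} c_i c_j K(x_i, x_j) ≥ 0. Then there exists a real Hilbert space H and a map φ : X → H such that K(x,x') = ⟪φ x, φ x'⟫ for all x, x' ∈ X. -/
universe u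

open Finsupp

/-- The bilinear form on finitely supported functions induced by a kernel `K`. -/
noncomputable def kernelForm {X : Type u} (K : X → X → ℝ) :
    (X →₀ ℝ) →ₗ[ℝ] (X →₀ ℝ) →ₗ[ℝ] ℝ :=
  Finsupp.lsum ℝ fun x => LinearMap.smulRight (LinearMap.id : ℝ →ₗ[ℝ] ℝ)
    (Finsupp.lsum ℝ fun y => LinearMap.smulRight (LinearMap.id : ℝ →ₗ[ℝ] ℝ) (K x y))

lemma kernelForm_apply {X : Type u} (K : X → X → ℝ) (f g : X →₀ ℝ) :
    kernelForm K f g = ∑ x ∈ f.support, ∑ y ∈ g.support, f x * g y * K x y := by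
  classical
  simp only [kernelForm, Finsupp.lsum_apply, Finsupp.sum, LinearMap.coe_sum, Finset.sum_apply,
    LinearMap.smul_apply, LinearMap.smulRight_apply, LinearMap.id_coe, id_eq, smul_eq_mul,
    Finset.mul_sum]
  exact Finset.sum_congr rfl fun x _ => Finset.sum_congr rfl fun y _ => by ring

lemma kernelForm_symm {X : Type u} (K : X → X → ℝ) (hsymm : ∀ x x', K x x' = K x' x)
    (f g : X →₀ ℝ) : kernelForm K f g = kernelForm K g f := by
  rw [kernelForm_apply, kernelForm_apply, Finset.sum_comm]
  exact Finset.sum_congr rfl fun y _ => Finset.sum_congr rfl fun x _ => by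
    rw [hsymm]; ring

lemma kernelForm_self_nonneg {X : Type u} (K : X → X → ℝ)
    (hpsd : ∀ (m : ℕ) (x : Fin m → X) (c : Fin m → ℝ),
      0 ≤ ∑ i, ∑ j, c i * c j * K (x i) (x j))
    (f : X →₀ ℝ) : 0 ≤ kernelForm K f f := by
  classical
  rw [kernelForm_apply]
  set s := f.support with hs
  let e := s.equivFin
  have h := hpsd s.card (fun i => ((e.symm i : s) : X)) (fun i => f ((e.symm i : s) : X))
  refine le_of_le_of_eq h ?_
  rw [← Finset.sum_coe_sort s (fun x => ∑ y ∈ s, f x * f y * K x y),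
    ← Equiv.sum_comp e.symm]
  refine Finset.sum_congr rfl fun i _ => ?_
  rw [← Finset.sum_coe_sort s (fun y => f _ * f y * K _ y), ← Equiv.sum_comp e.symm]

lemma kernelForm_single {X : Type u} (K : X → X → ℝ) (x x' : X) :
    kernelForm K (Finsupp.single x 1) (Finsupp.single x' 1) = K x x' := by
  classical
  rw [kernelForm_apply]
  simp [Finsupp.support_single_ne_zero _ (one_ne_zero)]

/-- Moore–Aronszajn: every symmetric positive semidefinite kernel `K : X × X → ℝ` is
the inner-product kernel of some feature map `φ : X → H` into a real Hilbert space. -/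
theorem exists_feature_map_of_psd_kernel
    {X : Type u} [Nonempty X] (K : X → X → ℝ)
    (hsymm : ∀ x x', K x x' = K x' x)
    (hpsd : ∀ (m : ℕ) (x : Fin m → X) (c : Fin m → ℝ),
      0 ≤ ∑ i, ∑ j, c i * c j * K (x i) (x j)) :
    ∃ (H : Type u) (i₁ : NormedAddCommGroup H) (i₂ : @InnerProductSpace ℝ H _ i₁.toSeminormedAddCommGroup)
      (_ : @CompleteSpace H i₁.toUniformSpace) (φ : X → H),
      ∀ x x', K x x' = @inner ℝ H (@InnerProductSpace.toInner ℝ H _ i₁.toSeminormedAddCommGroup i₂) (φ x) (φ x') := by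
  classical
  letI c : PreInnerProductSpace.Core ℝ (X →₀ ℝ) :=
  { inner := fun f g => kernelForm K f g
    conj_inner_symm := fun f g => by
      simpa using kernelForm_symm K hsymm g f
    re_inner_nonneg := fun f => by
      simpa using kernelForm_self_nonneg K hpsd f
    add_left := fun f g h => by simp
    smul_left := fun f g r => by simp }
  letI : Inner ℝ (X →₀ ℝ) := c.toInner
  letI : SeminormedAddCommGroup (X →₀ ℝ) := InnerProductSpace.Core.toSeminormedAddCommGroup (𝕜 := ℝ)
  letI : NormedSpace ℝ (X →₀ ℝ) := InnerProductSpace.Core.toNormedSpace (𝕜 := ℝ)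
  letI : InnerProductSpace ℝ (X →₀ ℝ) :=
  { norm_sq_eq_re_inner := fun f => by
      have : ‖f‖ = Real.sqrt (RCLike.re (inner ℝ f f : ℝ)) := rfl
      rw [this, Real.sq_sqrt (c.re_inner_nonneg f)]
    conj_inner_symm := c.conj_inner_symm
    add_left := c.add_left
    smul_left := c.smul_left }
  refine ⟨UniformSpace.Completion (SeparationQuotient (X →₀ ℝ)), inferInstance, inferInstance,
    inferInstance, fun x => ((SeparationQuotient.mk (Finsupp.single x 1) :
      SeparationQuotient (X →₀ ℝ)) : UniformSpace.Completion (SeparationQuotient (X →₀ ℝ))), ?_⟩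
  intro x x'
  rw [UniformSpace.Completion.inner_coe (𝕜 := ℝ), SeparationQuotient.inner_mk_mk]
  exact (kernelForm_single K x x').symm
end

section
/- Let σ > 0 and n ≥ 1. The Abel kernel K(x,x') = exp(−‖x − x'‖₂ / σ) on ℝⁿ is positive semidefinite: for every finite family x₁, …, x_m ∈ ℝⁿ and every c ∈ ℝ^m, ∑_{i,j} c_i c_j exp(−‖x_i − x_j‖₂ / σ) ≥ 0. -/
open MeasureTheory Set


lemma gram_nonneg {ι κ : Type*} [Fintype ι] [Fintype κ] (w : ι → κ → ℝ) (c : ι → ℝ) :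
    0 ≤ ∑ i, ∑ j, c i * c j * ∑ a, w i a * w j a := by
  have h : ∑ i, ∑ j, c i * c j * ∑ a, w i a * w j a
      = ∑ a, (∑ i, c i * w i a) ^ 2 :=
    calc ∑ i, ∑ j, c i * c j * ∑ a, w i a * w j a
        = ∑ i, ∑ j, ∑ a, (c i * w i a) * (c j * w j a) := by
          refine Finset.sum_congr rfl fun i _ => Finset.sum_congr rfl fun j _ => ?_
          rw [Finset.mul_sum]; exact Finset.sum_congr rfl fun a _ => by ring
      _ = ∑ i, ∑ a, ∑ j, (c i * w i a) * (c j * w j a) := by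
          refine Finset.sum_congr rfl fun i _ => ?_
          exact Finset.sum_comm (f := fun j a => (c i * w i a) * (c j * w j a))
      _ = ∑ a, ∑ i, ∑ j, (c i * w i a) * (c j * w j a) :=
          Finset.sum_comm (f := fun i a => ∑ j, (c i * w i a) * (c j * w j a))
      _ = ∑ a, (∑ i, c i * w i a) ^ 2 := by
          refine Finset.sum_congr rfl fun a _ => ?_
          rw [sq, Finset.sum_mul_sum]
  rw [h]
  positivity

lemma gram_pow_nonneg {ι κ : Type*} [Fintype ι] [Fintype κ] (v : ι → κ → ℝ) (c : ι → ℝ)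
    (k : ℕ) :
    0 ≤ ∑ i, ∑ j, c i * c j * (∑ a, v i a * v j a) ^ k := by
  classical
  have h : ∀ i j : ι, (∑ a, v i a * v j a) ^ k
      = ∑ t : Fin k → κ, (fun (i : ι) (t : Fin k → κ) => ∏ l, v i (t l)) i t
          * (fun (i : ι) (t : Fin k → κ) => ∏ l, v i (t l)) j t := by
    intro i j
    have h1 : (∑ a, v i a * v j a) ^ k = ∏ _l : Fin k, ∑ a, v i a * v j a := by
      rw [Finset.prod_const, Finset.card_univ, Fintype.card_fin]
    rw [h1, Fintype.prod_sum]
    exact Finset.sum_congr rfl fun t _ => by rw [← Finset.prod_mul_distrib]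
  have key := gram_nonneg (fun (i : ι) (t : Fin k → κ) => ∏ l, v i (t l)) c
  refine le_of_le_of_eq key ?_
  refine Finset.sum_congr rfl fun i _ => Finset.sum_congr rfl fun j _ => ?_
  rw [h i j]

lemma gram_exp_nonneg {ι κ : Type*} [Fintype ι] [Fintype κ] (v : ι → κ → ℝ) (c : ι → ℝ) :
    0 ≤ ∑ i, ∑ j, c i * c j * Real.exp (∑ a, v i a * v j a) := by
  classical
  set A : ι → ι → ℝ := fun i j => ∑ a, v i a * v j a with hA
  have hsumm : ∀ p : ι × ι, Summable (fun k : ℕ => c p.1 * c p.2 * (A p.1 p.2 ^ k / k.factorial)) :=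
    fun p => (Real.summable_pow_div_factorial (A p.1 p.2)).mul_left _
  have hexp : ∀ i j : ι, c i * c j * Real.exp (A i j)
      = ∑' k : ℕ, c i * c j * (A i j ^ k / k.factorial) := by
    intro i j
    rw [Real.exp_eq_exp_ℝ, NormedSpace.exp_eq_tsum_div, tsum_mul_left]
  have h1 : ∑ i, ∑ j, c i * c j * Real.exp (A i j)
      = ∑' k : ℕ, ∑ p : ι × ι, c p.1 * c p.2 * (A p.1 p.2 ^ k / k.factorial) := by
    have : ∑ i, ∑ j, c i * c j * Real.exp (A i j)
        = ∑ p : ι × ι, ∑' k : ℕ, c p.1 * c p.2 * (A p.1 p.2 ^ k / k.factorial) := by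
      rw [Fintype.sum_prod_type]
      exact Finset.sum_congr rfl fun i _ => Finset.sum_congr rfl fun j _ => hexp i j
    rw [this]
    exact (Summable.tsum_finsetSum (fun p _ => hsumm p)).symm
  rw [h1]
  refine tsum_nonneg fun k => ?_
  rw [Fintype.sum_prod_type]
  have h2 : ∑ i, ∑ j, c i * c j * (A i j ^ k / (k.factorial : ℝ))
      = (∑ i, ∑ j, c i * c j * A i j ^ k) / k.factorial := by
    rw [Finset.sum_div]
    exact Finset.sum_congr rfl fun i _ => by rw [Finset.sum_div]; exact Finset.sum_congr rfl fun j _ => by ring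
  rw [h2]
  exact div_nonneg (gram_pow_nonneg v c k) (Nat.cast_nonneg _)

lemma gauss_nonneg {ι : Type*} [Fintype ι] {n : ℕ} {t : ℝ} (ht : 0 ≤ t)
    (x : ι → EuclideanSpace ℝ (Fin n)) (c : ι → ℝ) :
    0 ≤ ∑ i, ∑ j, c i * c j * Real.exp (-(t * ‖x i - x j‖ ^ 2)) := by
  have hnorm : ∀ i j : ι, (‖x i - x j‖ : ℝ) ^ 2
      = ‖x i‖ ^ 2 - 2 * (inner ℝ (x i) (x j) : ℝ) + ‖x j‖ ^ 2 := fun i j => norm_sub_sq_real _ _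
  have hinner : ∀ i j : ι, (inner ℝ (x i) (x j) : ℝ) = ∑ a, x i a * x j a := by
    intro i j
    simp [PiLp.inner_apply, RCLike.inner_apply, conj_trivial, mul_comm]
  set s : ℝ := Real.sqrt (2 * t) with hs
  have hs2 : s ^ 2 = 2 * t := Real.sq_sqrt (by linarith)
  have key : ∀ i j : ι, Real.exp (-(t * ‖x i - x j‖ ^ 2))
      = Real.exp (-(t * ‖x i‖ ^ 2)) * Real.exp (-(t * ‖x j‖ ^ 2))
        * Real.exp (∑ a, (s * x i a) * (s * x j a)) := by
    intro i j
    rw [← Real.exp_add, ← Real.exp_add]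
    congr 1
    have : ∑ a, (s * x i a) * (s * x j a) = s ^ 2 * ∑ a, x i a * x j a := by
      rw [Finset.mul_sum]; exact Finset.sum_congr rfl fun a _ => by ring
    rw [this, hs2, ← hinner, hnorm i j]
    ring
  have h0 := gram_exp_nonneg (fun i a => s * x i a)
      (fun i => c i * Real.exp (-(t * ‖x i‖ ^ 2)))
  refine le_of_le_of_eq h0 ?_
  refine Finset.sum_congr rfl fun i _ => Finset.sum_congr rfl fun j _ => ?_
  rw [key i j]
  ring

noncomputable def Fint (s : ℝ) : ℝ :=
  ∫ t in Ioi (0:ℝ), (1 - Real.exp (-(t * s))) * t ^ (-(3/2) : ℝ)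

lemma integrable_g {s : ℝ} (hs : 0 ≤ s) :
    IntegrableOn (fun t : ℝ => (1 - Real.exp (-(t * s))) * t ^ (-(3/2) : ℝ)) (Ioi 0) := by
  have hcont : ∀ u : Set ℝ, u ⊆ Ioi 0 →
      ContinuousOn (fun t : ℝ => (1 - Real.exp (-(t * s))) * t ^ (-(3/2) : ℝ)) u := by
    intro u hu
    exact ((continuous_const.sub ((continuous_id.mul continuous_const).neg.rexp)).continuousOn).mul
      (continuousOn_id.rpow_const fun x hx => Or.inl (ne_of_gt (hu hx)))
  have hsplit : Ioc (0:ℝ) 1 ∪ Ioi 1 = Ioi 0 := Ioc_union_Ioi_eq_Ioi zero_le_one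
  rw [← hsplit]
  refine IntegrableOn.union ?_ ?_
  · have hint : IntegrableOn (fun t : ℝ => s * t ^ (-(1/2) : ℝ)) (Ioc (0:ℝ) 1) := by
      have h := intervalIntegral.intervalIntegrable_rpow' (a := 0) (b := 1)
        (r := (-(1/2) : ℝ)) (by norm_num)
      rw [intervalIntegrable_iff_integrableOn_Ioc_of_le zero_le_one] at h
      exact h.const_mul s
    refine hint.integrable.mono
      ((hcont _ (Ioc_subset_Ioi_self)).aestronglyMeasurable measurableSet_Ioc) ?_
    rw [ae_restrict_iff' measurableSet_Ioc]
    refine Filter.Eventually.of_forall fun t ht => ?_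
    obtain ⟨ht0, ht1⟩ := ht
    have hts : 0 ≤ t * s := mul_nonneg ht0.le hs
    have h1 : 0 ≤ 1 - Real.exp (-(t * s)) := by
      have := Real.exp_le_one_iff.mpr (neg_nonpos.mpr hts)
      linarith
    have h2 : 1 - Real.exp (-(t * s)) ≤ t * s := by
      have := Real.add_one_le_exp (-(t * s))
      linarith
    have hrp : (0:ℝ) < t ^ (-(3/2) : ℝ) := Real.rpow_pos_of_pos ht0 _
    rw [Real.norm_eq_abs, Real.norm_eq_abs, abs_of_nonneg (mul_nonneg h1 hrp.le),
      abs_of_nonneg (mul_nonneg hs (Real.rpow_pos_of_pos ht0 _).le)]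
    calc (1 - Real.exp (-(t * s))) * t ^ (-(3/2) : ℝ)
        ≤ (t * s) * t ^ (-(3/2) : ℝ) := mul_le_mul_of_nonneg_right h2 hrp.le
      _ = s * (t * t ^ (-(3/2) : ℝ)) := by ring
      _ = s * t ^ (-(1/2) : ℝ) := by
          congr 1
          rw [show (-(1/2) : ℝ) = 1 + (-(3/2)) by norm_num, Real.rpow_add ht0,
            Real.rpow_one]
  · have hint : IntegrableOn (fun t : ℝ => t ^ (-(3/2) : ℝ)) (Ioi (1:ℝ)) :=
      integrableOn_Ioi_rpow_of_lt (by norm_num) one_pos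
    refine hint.integrable.mono
      ((hcont _ (Ioi_subset_Ioi zero_le_one)).aestronglyMeasurable measurableSet_Ioi) ?_
    rw [ae_restrict_iff' measurableSet_Ioi]
    refine Filter.Eventually.of_forall fun t ht => ?_
    have ht0 : (0:ℝ) < t := lt_trans one_pos ht
    have hts : 0 ≤ t * s := mul_nonneg ht0.le hs
    have h1 : 0 ≤ 1 - Real.exp (-(t * s)) := by
      have := Real.exp_le_one_iff.mpr (neg_nonpos.mpr hts)
      linarith
    have h2 : 1 - Real.exp (-(t * s)) ≤ 1 := by
      have := Real.exp_pos (-(t * s)); linarith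
    have hrp : (0:ℝ) < t ^ (-(3/2) : ℝ) := Real.rpow_pos_of_pos ht0 _
    rw [Real.norm_eq_abs, Real.norm_eq_abs, abs_of_nonneg (mul_nonneg h1 hrp.le),
      abs_of_nonneg hrp.le]
    nlinarith

lemma Fint_scale {s : ℝ} (hs : 0 < s) : Fint s = Real.sqrt s * Fint 1 := by
  have key : ∀ t ∈ Ioi (0:ℝ), (1 - Real.exp (-(t * s))) * t ^ (-(3/2) : ℝ)
      = s ^ ((3:ℝ)/2) * ((1 - Real.exp (-(s * t))) * (s * t) ^ (-(3/2) : ℝ)) := by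
    intro t ht
    have ht0 : (0:ℝ) < t := ht
    rw [Real.mul_rpow hs.le ht0.le, mul_comm t s]
    rw [show s ^ ((3:ℝ)/2) * ((1 - Real.exp (-(s * t))) * (s ^ (-(3/2):ℝ) * t ^ (-(3/2):ℝ)))
        = (s ^ ((3:ℝ)/2) * s ^ (-(3/2):ℝ)) * ((1 - Real.exp (-(s * t))) * t ^ (-(3/2):ℝ))
        from by ring, ← Real.rpow_add hs]
    norm_num
  have h1 : Fint s = s ^ ((3:ℝ)/2) *
      ∫ t in Ioi (0:ℝ), (1 - Real.exp (-(s * t))) * (s * t) ^ (-(3/2) : ℝ) := by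
    rw [Fint, setIntegral_congr_fun measurableSet_Ioi key, integral_const_mul]
  have h2 : (∫ t in Ioi (0:ℝ), (1 - Real.exp (-(s * t))) * (s * t) ^ (-(3/2) : ℝ))
      = s⁻¹ * Fint 1 := by
    have := MeasureTheory.integral_comp_mul_left_Ioi
      (g := fun u : ℝ => (1 - Real.exp (-u)) * u ^ (-(3/2) : ℝ)) (a := 0) hs
    simp only [mul_zero] at this
    rw [this, smul_eq_mul]
    congr 1
    rw [Fint]
    refine setIntegral_congr_fun measurableSet_Ioi fun t ht => ?_
    rw [mul_one]
  rw [h1, h2, ← mul_assoc]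
  congr 1
  rw [Real.sqrt_eq_rpow, show s ^ ((3:ℝ)/2) * s⁻¹ = s ^ ((3:ℝ)/2) * s ^ (-1:ℝ) from by
    rw [Real.rpow_neg_one], ← Real.rpow_add hs]
  norm_num

lemma Fint_zero : Fint 0 = 0 := by
  rw [Fint]
  simp

lemma Fint_one_pos : 0 < Fint 1 := by
  rw [Fint]
  rw [setIntegral_pos_iff_support_of_nonneg_ae ?_ ?_]
  · refine lt_of_lt_of_le ?_ (measure_mono (?_ : Ioi (1:ℝ) ⊆ _))
    · simp [Real.volume_Ioi]
    · intro t ht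
      have ht0 : (0:ℝ) < t := lt_trans one_pos ht
      constructor
      · have h1 : Real.exp (-(t * 1)) < 1 := by
          rw [Real.exp_lt_one_iff]; linarith
        have hrp : (0:ℝ) < t ^ (-(3/2) : ℝ) := Real.rpow_pos_of_pos ht0 _
        exact ne_of_gt (mul_pos (by linarith) hrp)
      · exact ht0
  · filter_upwards [ae_restrict_mem measurableSet_Ioi] with t ht
    have ht0 : (0:ℝ) < t := ht
    have h1 : Real.exp (-(t * 1)) ≤ 1 := by
      rw [Real.exp_le_one_iff]; linarith
    exact mul_nonneg (by linarith) (Real.rpow_pos_of_pos ht0 _).le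
  · exact integrable_g zero_le_one

lemma norm_cnd {ι : Type*} [Fintype ι] {n : ℕ} (x : ι → EuclideanSpace ℝ (Fin n))
    (c : ι → ℝ) (hc : ∑ i, c i = 0) :
    ∑ i, ∑ j, c i * c j * ‖x i - x j‖ ≤ 0 := by
  classical
  have hFs : ∀ i j : ι, Fint (‖x i - x j‖ ^ 2) = ‖x i - x j‖ * Fint 1 := by
    intro i j
    rcases eq_or_lt_of_le (sq_nonneg (‖x i - x j‖)) with h | h
    · rw [← h, Fint_zero]
      have : ‖x i - x j‖ = 0 := by nlinarith [norm_nonneg (x i - x j)]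
      rw [this, zero_mul]
    · rw [Fint_scale h, Real.sqrt_sq (norm_nonneg _)]
  -- reduce to the Fint sum
  have main : ∑ p : ι × ι, c p.1 * c p.2 * Fint (‖x p.1 - x p.2‖ ^ 2) ≤ 0 := by
    have hInt : ∀ p : ι × ι, Integrable
        (fun t : ℝ => c p.1 * c p.2 * ((1 - Real.exp (-(t * (‖x p.1 - x p.2‖ ^ 2))))
          * t ^ (-(3/2) : ℝ))) (volume.restrict (Ioi 0)) :=
      fun p => (integrable_g (sq_nonneg _)).const_mul _
    have hswap : ∑ p : ι × ι, c p.1 * c p.2 * Fint (‖x p.1 - x p.2‖ ^ 2)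
        = ∫ t in Ioi (0:ℝ), ∑ p : ι × ι,
            c p.1 * c p.2 * ((1 - Real.exp (-(t * (‖x p.1 - x p.2‖ ^ 2))))
              * t ^ (-(3/2) : ℝ)) := by
      rw [integral_finset_sum _ (fun p _ => hInt p)]
      exact Finset.sum_congr rfl fun p _ => by rw [Fint, ← integral_const_mul]
    rw [hswap]
    refine integral_nonpos_of_ae ?_
    filter_upwards [ae_restrict_mem measurableSet_Ioi] with t ht
    simp only [Pi.zero_apply]
    have ht0 : (0:ℝ) < t := ht
    have hrp : (0:ℝ) ≤ t ^ (-(3/2) : ℝ) := (Real.rpow_pos_of_pos ht0 _).le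
    have hsum0 : ∑ p : ι × ι, c p.1 * c p.2 = 0 := by
      rw [Fintype.sum_prod_type, ← Finset.sum_mul_sum, hc, zero_mul]
    have hgauss := gauss_nonneg (t := t) ht0.le x c
    have hexpand : ∑ p : ι × ι,
        c p.1 * c p.2 * ((1 - Real.exp (-(t * (‖x p.1 - x p.2‖ ^ 2))))
          * t ^ (-(3/2) : ℝ))
        = (∑ p : ι × ι, c p.1 * c p.2) * t ^ (-(3/2) : ℝ)
          - (∑ i, ∑ j, c i * c j * Real.exp (-(t * ‖x i - x j‖ ^ 2)))
            * t ^ (-(3/2) : ℝ) := by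
      simp only [Fintype.sum_prod_type]
      rw [Finset.sum_mul, Finset.sum_mul, ← Finset.sum_sub_distrib]
      refine Finset.sum_congr rfl fun i _ => ?_
      rw [Finset.sum_mul, Finset.sum_mul, ← Finset.sum_sub_distrib]
      exact Finset.sum_congr rfl fun j _ => by ring
    rw [hexpand, hsum0, zero_mul, zero_sub, neg_nonpos]
    exact mul_nonneg hgauss hrp
  have hfinal : ∑ i, ∑ j, c i * c j * ‖x i - x j‖
      = (Fint 1)⁻¹ * ∑ p : ι × ι, c p.1 * c p.2 * Fint (‖x p.1 - x p.2‖ ^ 2) := by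
    rw [Fintype.sum_prod_type, Finset.mul_sum]
    refine Finset.sum_congr rfl fun i _ => ?_
    rw [Finset.mul_sum]
    refine Finset.sum_congr rfl fun j _ => ?_
    rw [hFs i j]
    have hne : Fint 1 ≠ 0 := ne_of_gt Fint_one_pos
    field_simp
  rw [hfinal]
  exact mul_nonpos_of_nonneg_of_nonpos (inv_nonneg.mpr Fint_one_pos.le) main

/-- The Abel kernel `K(x,x') = exp(-‖x - x'‖₂/σ)` on `ℝⁿ` is positive semidefinite. -/
theorem abel_kernel_posSemidef
    {n : ℕ} (hn : 1 ≤ n) (σ : ℝ) (hσ : 0 < σ)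
    {m : ℕ} (x : Fin m → EuclideanSpace ℝ (Fin n)) (c : Fin m → ℝ) :
    0 ≤ ∑ i, ∑ j, c i * c j * Real.exp (-‖x i - x j‖ / σ) := by
  classical
  -- Step 1: the quadratic form of K i j = (‖x i‖ + ‖x j‖ - ‖x i - x j‖)/σ is nonneg
  have hQ : ∀ v : Fin m → ℝ,
      0 ≤ ∑ i, ∑ j, v i * v j * ((‖x i‖ + ‖x j‖ - ‖x i - x j‖) / σ) := by
    intro v
    set S : ℝ := ∑ i, v i with hS
    have key := norm_cnd (ι := Option (Fin m))
      (fun o => o.elim 0 x) (fun o => o.elim (-S) v)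
      (by rw [Fintype.sum_option]; simp [hS])
    simp only [Fintype.sum_option, Option.elim_none, Option.elim_some, sub_zero, zero_sub,
      norm_neg, sub_self, norm_zero, mul_zero, zero_add] at key
    set A : ℝ := ∑ i, v i * ‖x i‖ with hA
    set D : ℝ := ∑ i, ∑ j, v i * v j * ‖x i - x j‖ with hD
    have e1 : ∑ i : Fin m, -S * v i * ‖x i‖ = -(S * A) :=
      calc ∑ i : Fin m, -S * v i * ‖x i‖
          = ∑ i : Fin m, -(S * (v i * ‖x i‖)) :=
            Finset.sum_congr rfl fun i _ => by ring
        _ = -(S * A) := by rw [Finset.sum_neg_distrib, ← Finset.mul_sum]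
    have e2 : ∑ i : Fin m, (v i * -S * ‖x i‖ + ∑ j, v i * v j * ‖x i - x j‖)
        = -(S * A) + D := by
      rw [Finset.sum_add_distrib]
      congr 1
      calc ∑ i : Fin m, v i * -S * ‖x i‖
          = ∑ i : Fin m, -(S * (v i * ‖x i‖)) :=
            Finset.sum_congr rfl fun i _ => by ring
        _ = -(S * A) := by rw [Finset.sum_neg_distrib, ← Finset.mul_sum]
    rw [e1, e2] at key
    have hsplit : ∑ i, ∑ j, v i * v j * ((‖x i‖ + ‖x j‖ - ‖x i - x j‖) / σ)
        = (∑ i, ∑ j, v i * v j * (‖x i‖ + ‖x j‖ - ‖x i - x j‖)) / σ := by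
      rw [Finset.sum_div]
      refine Finset.sum_congr rfl fun i _ => ?_
      rw [Finset.sum_div]
      exact Finset.sum_congr rfl fun j _ => by rw [mul_div_assoc]
    have hT2 : ∑ i, ∑ j, v i * v j * (‖x i‖ + ‖x j‖ - ‖x i - x j‖)
        = A * S + S * A - D :=
      calc ∑ i, ∑ j, v i * v j * (‖x i‖ + ‖x j‖ - ‖x i - x j‖)
          = ∑ i, (v i * ‖x i‖ * S + v i * A - ∑ j, v i * v j * ‖x i - x j‖) := by
            refine Finset.sum_congr rfl fun i _ => ?_
            rw [hS, hA, Finset.mul_sum, Finset.mul_sum, ← Finset.sum_add_distrib,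
              ← Finset.sum_sub_distrib]
            exact Finset.sum_congr rfl fun j _ => by ring
        _ = A * S + S * A - D := by
            rw [Finset.sum_sub_distrib, Finset.sum_add_distrib, ← hD, ← Finset.sum_mul,
              ← Finset.sum_mul, ← hA, ← hS]
    rw [hsplit, hT2]
    refine div_nonneg ?_ hσ.le
    nlinarith [key]
  -- Step 2: K is PSD as a matrix; extract a Gram representation
  set K : Matrix (Fin m) (Fin m) ℝ :=
    Matrix.of (fun i j => (‖x i‖ + ‖x j‖ - ‖x i - x j‖) / σ) with hK
  have hKpsd : K.PosSemidef := by
    rw [Matrix.posSemidef_iff_dotProduct_mulVec]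
    constructor
    · ext i j
      simp only [Matrix.conjTranspose_apply, hK, Matrix.of_apply, star_trivial]
      rw [norm_sub_rev]
      ring
    · intro v
      have h := hQ v
      have hdot : dotProduct (star v) (K.mulVec v)
          = ∑ i, ∑ j, v i * v j * ((‖x i‖ + ‖x j‖ - ‖x i - x j‖) / σ) := by
        rw [dotProduct]
        refine Finset.sum_congr rfl fun i _ => ?_
        rw [Pi.star_apply, star_trivial, Matrix.mulVec, dotProduct, Finset.mul_sum]
        exact Finset.sum_congr rfl fun j _ => by
          simp only [hK, Matrix.of_apply]; ring
      rw [hdot]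
      exact h
  obtain ⟨B, hB⟩ : ∃ B : Matrix (Fin m) (Fin m) ℝ, K = B.conjTranspose * B := by
    open scoped MatrixOrder in exact CStarAlgebra.nonneg_iff_eq_star_mul_self.mp hKpsd.nonneg
  have hKentry : ∀ i j, (∑ a, B a i * B a j) = (‖x i‖ + ‖x j‖ - ‖x i - x j‖) / σ := by
    intro i j
    have h1 : K i j = (B.conjTranspose * B) i j := by rw [← hB]
    have h2 : (B.conjTranspose * B) i j = ∑ a, B a i * B a j := by
      rw [Matrix.mul_apply]
      exact Finset.sum_congr rfl fun a _ => by
        rw [Matrix.conjTranspose_apply, star_trivial]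
    rw [← h2, ← h1]
    simp only [hK, Matrix.of_apply]
  -- Step 3: assemble
  have key := gram_exp_nonneg (fun i a => B a i) (fun i => c i * Real.exp (-‖x i‖ / σ))
  refine le_of_le_of_eq key ?_
  refine Finset.sum_congr rfl fun i _ => Finset.sum_congr rfl fun j _ => ?_
  show c i * Real.exp (-‖x i‖ / σ) * (c j * Real.exp (-‖x j‖ / σ))
      * Real.exp (∑ a, B a i * B a j) = _
  rw [hKentry i j]
  have harg : -‖x i‖ / σ + -‖x j‖ / σ + (‖x i‖ + ‖x j‖ - ‖x i - x j‖) / σ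
      = -‖x i - x j‖ / σ := by ring
  rw [show c i * Real.exp (-‖x i‖ / σ) * (c j * Real.exp (-‖x j‖ / σ))
      * Real.exp ((‖x i‖ + ‖x j‖ - ‖x i - x j‖) / σ)
      = c i * c j * Real.exp (-‖x i‖ / σ + -‖x j‖ / σ
          + (‖x i‖ + ‖x j‖ - ‖x i - x j‖) / σ) from by
    rw [Real.exp_add, Real.exp_add]; ring, harg]
end
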